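/- arXiv:1812.05442 — 6 statements merged into one kernel-verified Lean document; each statement's English description precedes it below -/
import Mathlib

section
/- Let ι be a finite nonempty type of indices, Bd a nonempty subset of ι (the boundary indices), and S : ι → Finset ι with i ∈ S i for every i (the support neighborhoods). Let u : ι → ℝ and let c : ι → ι → ℝ be a family of weight vectors. Assume: (i) for every i ∉ Bd at which u is a local discrete extremum (i.e. u i ≥ u j for all j ∈ S i, or u i ≤ u j for all j ∈ S i), the weights satisfy c i j ≥ 0 for all j, c i i = 0, c i j = 0 for j ∉ S i, Σ_j c i j = 1, and u i = Σ_j (c i j) · (u j); and (ii) for every nonempty set T ⊆ ι of non-boundary indices on which u is constant and each of whose members is a local discrete extremum, there exists i ∈ T with c i j > 0 for some j ∉ T. Then the global discrete maximum principle holds: for every i ∈ ι, (min of u over Bd) ≤ u i ≤ (max of u over Bd). -/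
/-- Global discrete maximum principle (algebraic core of Theorem 3.2).
If at every non-boundary local discrete extremum the value is a convex combination of
its neighbor values, and every constant set of non-boundary extrema has a positive
weight leading outside, then every value is bounded by the boundary data. -/
theorem global_discrete_maximum_principle
    {ι : Type*} [Fintype ι] [Nonempty ι]
    (Bd : Set ι) (hBd : Bd.Nonempty)
    (S : ι → Finset ι) (hS : ∀ i, i ∈ S i)
    (u : ι → ℝ) (c : ι → ι → ℝ)
    (hconv : ∀ i, i ∉ Bd →
      ((∀ j ∈ S i, u j ≤ u i) ∨ (∀ j ∈ S i, u i ≤ u j)) →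
      (∀ j, 0 ≤ c i j) ∧ c i i = 0 ∧ (∀ j, j ∉ S i → c i j = 0) ∧
      (∑ j, c i j) = 1 ∧ u i = ∑ j, c i j * u j)
    (hconn : ∀ T : Set ι, T.Nonempty → (∀ i ∈ T, i ∉ Bd) →
      (∀ i ∈ T, ∀ j ∈ T, u i = u j) →
      (∀ i ∈ T, (∀ j ∈ S i, u j ≤ u i) ∨ (∀ j ∈ S i, u i ≤ u j)) →
      ∃ i ∈ T, ∃ j, j ∉ T ∧ 0 < c i j) :
    ∀ i, sInf (u '' Bd) ≤ u i ∧ u i ≤ sSup (u '' Bd) := by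
  classical
  obtain ⟨m, hm⟩ := Finite.exists_max u
  obtain ⟨n, hn⟩ := Finite.exists_min u
  have hBA : BddAbove (u '' Bd) := (Bd.toFinite.image u).bddAbove
  have hBB : BddBelow (u '' Bd) := (Bd.toFinite.image u).bddBelow
  -- the global maximum is attained on the boundary
  have hup : ∃ b ∈ Bd, u m ≤ u b := by
    by_contra h
    push_neg at h
    set T : Set ι := {i | u i = u m} with hT
    have hTne : T.Nonempty := ⟨m, rfl⟩
    have hTnb : ∀ i ∈ T, i ∉ Bd := by
      intro i hi hib
      exact absurd hi (ne_of_lt (h i hib))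
    have hconst : ∀ i ∈ T, ∀ j ∈ T, u i = u j := fun i hi j hj => hi.trans hj.symm
    have hext : ∀ i ∈ T, (∀ j ∈ S i, u j ≤ u i) ∨ (∀ j ∈ S i, u i ≤ u j) :=
      fun i hi => Or.inl (fun j _ => (hm j).trans_eq hi.symm)
    obtain ⟨i, hiT, j, hjT, hcj⟩ := hconn T hTne hTnb hconst hext
    obtain ⟨hc0, -, -, hcs, hcu⟩ := hconv i (hTnb i hiT) (hext i hiT)
    have hlt : ∑ k, c i k * u k < ∑ k, c i k * u m := by
      apply Finset.sum_lt_sum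
      · intro k _; exact mul_le_mul_of_nonneg_left (hm k) (hc0 k)
      · refine ⟨j, Finset.mem_univ j, ?_⟩
        have hj : u j < u m := lt_of_le_of_ne (hm j) hjT
        exact mul_lt_mul_of_pos_left hj hcj
    rw [← hcu, ← Finset.sum_mul, hcs, one_mul] at hlt
    exact hlt.ne hiT
  -- the global minimum is attained on the boundary
  have hlo : ∃ b ∈ Bd, u b ≤ u n := by
    by_contra h
    push_neg at h
    set T : Set ι := {i | u i = u n} with hT
    have hTne : T.Nonempty := ⟨n, rfl⟩
    have hTnb : ∀ i ∈ T, i ∉ Bd := by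
      intro i hi hib
      exact absurd hi (ne_of_gt (h i hib))
    have hconst : ∀ i ∈ T, ∀ j ∈ T, u i = u j := fun i hi j hj => hi.trans hj.symm
    have hext : ∀ i ∈ T, (∀ j ∈ S i, u j ≤ u i) ∨ (∀ j ∈ S i, u i ≤ u j) :=
      fun i hi => Or.inr (fun j _ => hi.trans_le (hn j))
    obtain ⟨i, hiT, j, hjT, hcj⟩ := hconn T hTne hTnb hconst hext
    obtain ⟨hc0, -, -, hcs, hcu⟩ := hconv i (hTnb i hiT) (hext i hiT)
    have hlt : ∑ k, c i k * u n < ∑ k, c i k * u k := by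
      apply Finset.sum_lt_sum
      · intro k _; exact mul_le_mul_of_nonneg_left (hn k) (hc0 k)
      · refine ⟨j, Finset.mem_univ j, ?_⟩
        have hj : u n < u j := lt_of_le_of_ne (hn j) (fun e => hjT e.symm)
        exact mul_lt_mul_of_pos_left hj hcj
    rw [← hcu, ← Finset.sum_mul, hcs, one_mul] at hlt
    exact hlt.ne' hiT
  intro i
  obtain ⟨b1, hb1, hub1⟩ := hup
  obtain ⟨b2, hb2, hub2⟩ := hlo
  constructor
  · exact le_trans (csInf_le hBB ⟨b2, hb2, rfl⟩) (hub2.trans (hn i))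
  · exact le_trans ((hm i).trans hub1) (le_csSup hBA ⟨b1, hb1, rfl⟩)
end

section
/- For a fixed index i, consider real numbers u_i, finite nonempty families (u_j), (u_j^sym) of neighbor values, and positive distances r_j > 0 and ρ_j > 0. Define the jump [[∇u]]_ij := (u_j − u_i)/r_j + (u_j^sym − u_i)/ρ_j and twice the mean 2{{|∇u|}}_ij := |u_j − u_i|/r_j + |u_j^sym − u_i|/ρ_j. Assume the denominator D := Σ_j 2{{|∇u|}}_ij is nonzero, and set R := |Σ_j [[∇u]]_ij| / D. Then 0 ≤ R ≤ 1, and R = 1 if and only if u_i is a local discrete extremum, i.e. (u_j ≤ u_i and u_j^sym ≤ u_i for all j) or (u_j ≥ u_i and u_j^sym ≥ u_i for all j). -/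
/-- the shock-detector ratio `R = |Σ jumps| / Σ (2 means)` lies in `[0,1]`
and equals 1 exactly when `u i` is a local discrete extremum. -/
theorem shock_detector_ratio_bounds
    {ι : Type*} (s : Finset ι) (hs : s.Nonempty)
    (ui : ℝ) (u usym : ι → ℝ) (r ρ : ι → ℝ)
    (hr : ∀ j ∈ s, 0 < r j) (hρ : ∀ j ∈ s, 0 < ρ j)
    (D : ℝ)
    (hD : D = ∑ j ∈ s, (|u j - ui| / r j + |usym j - ui| / ρ j))
    (hD0 : D ≠ 0)
    (R : ℝ)
    (hR : R = |∑ j ∈ s, ((u j - ui) / r j + (usym j - ui) / ρ j)| / D) :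
    0 ≤ R ∧ R ≤ 1 ∧
    (R = 1 ↔
      ((∀ j ∈ s, u j ≤ ui ∧ usym j ≤ ui) ∨ (∀ j ∈ s, ui ≤ u j ∧ ui ≤ usym j))) := by
  have hD' : D = ∑ j ∈ s, (|(u j - ui) / r j| + |(usym j - ui) / ρ j|) := by
    rw [hD]
    refine Finset.sum_congr rfl fun j hj => ?_
    rw [abs_div, abs_div, abs_of_pos (hr j hj), abs_of_pos (hρ j hj)]
  have hDnn : 0 ≤ D := by
    rw [hD']; exact Finset.sum_nonneg fun j _ => by positivity
  have hDpos : 0 < D := hDnn.lt_of_ne' hD0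
  set N := ∑ j ∈ s, ((u j - ui) / r j + (usym j - ui) / ρ j) with hN
  have hNle : |N| ≤ D := by
    rw [hD']
    calc |N| ≤ ∑ j ∈ s, |(u j - ui) / r j + (usym j - ui) / ρ j| :=
          Finset.abs_sum_le_sum_abs _ _
      _ ≤ _ := Finset.sum_le_sum fun j _ => abs_add_le _ _
  have hsub : D - N = ∑ j ∈ s, ((|(u j - ui) / r j| - (u j - ui) / r j)
      + (|(usym j - ui) / ρ j| - (usym j - ui) / ρ j)) := by
    rw [hD', hN, ← Finset.sum_sub_distrib]
    exact Finset.sum_congr rfl fun j _ => by ring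
  have hadd : D + N = ∑ j ∈ s, ((|(u j - ui) / r j| + (u j - ui) / r j)
      + (|(usym j - ui) / ρ j| + (usym j - ui) / ρ j)) := by
    rw [hD', hN, ← Finset.sum_add_distrib]
    exact Finset.sum_congr rfl fun j _ => by ring
  have hdivpos : ∀ j ∈ s, (0 ≤ (u j - ui) / r j ↔ ui ≤ u j) := fun j hj => by
    rw [le_div_iff₀ (hr j hj), zero_mul, sub_nonneg]
  have hdivpos' : ∀ j ∈ s, (0 ≤ (usym j - ui) / ρ j ↔ ui ≤ usym j) := fun j hj => by
    rw [le_div_iff₀ (hρ j hj), zero_mul, sub_nonneg]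
  have hdivneg : ∀ j ∈ s, ((u j - ui) / r j ≤ 0 ↔ u j ≤ ui) := fun j hj => by
    rw [div_le_iff₀ (hr j hj), zero_mul, sub_nonpos]
  have hdivneg' : ∀ j ∈ s, ((usym j - ui) / ρ j ≤ 0 ↔ usym j ≤ ui) := fun j hj => by
    rw [div_le_iff₀ (hρ j hj), zero_mul, sub_nonpos]
  refine ⟨by rw [hR]; positivity, by rw [hR]; exact div_le_one_of_le₀ hNle hDnn, ?_⟩
  rw [hR, div_eq_one_iff_eq hD0, abs_eq hDnn]
  have hNDiff : N = D ↔ ∀ j ∈ s, ui ≤ u j ∧ ui ≤ usym j := by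
    rw [show (N = D ↔ D - N = 0) by constructor <;> intro h <;> linarith]
    rw [hsub, Finset.sum_eq_zero_iff_of_nonneg fun j _ => by
      have := abs_nonneg ((u j - ui) / r j)
      have := le_abs_self ((u j - ui) / r j)
      have := le_abs_self ((usym j - ui) / ρ j)
      linarith]
    refine forall₂_congr fun j hj => ?_
    have h1 := le_abs_self ((u j - ui) / r j)
    have h2 := le_abs_self ((usym j - ui) / ρ j)
    constructor
    · intro h
      have ha : |(u j - ui) / r j| = (u j - ui) / r j := by linarith
      have hb : |(usym j - ui) / ρ j| = (usym j - ui) / ρ j := by linarith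
      exact ⟨(hdivpos j hj).mp (abs_eq_self.mp ha),
             (hdivpos' j hj).mp (abs_eq_self.mp hb)⟩
    · intro ⟨ha, hb⟩
      have : |(u j - ui) / r j| = (u j - ui) / r j :=
        abs_of_nonneg ((hdivpos j hj).mpr ha)
      have : |(usym j - ui) / ρ j| = (usym j - ui) / ρ j :=
        abs_of_nonneg ((hdivpos' j hj).mpr hb)
      linarith [abs_of_nonneg ((hdivpos j hj).mpr ha)]
  have hNDneg : N = -D ↔ ∀ j ∈ s, u j ≤ ui ∧ usym j ≤ ui := by
    rw [show (N = -D ↔ D + N = 0) by constructor <;> intro h <;> linarith]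
    rw [hadd, Finset.sum_eq_zero_iff_of_nonneg fun j _ => by
      have := neg_abs_le ((u j - ui) / r j)
      have := neg_abs_le ((usym j - ui) / ρ j)
      linarith]
    refine forall₂_congr fun j hj => ?_
    have h1 := neg_abs_le ((u j - ui) / r j)
    have h2 := neg_abs_le ((usym j - ui) / ρ j)
    constructor
    · intro h
      have ha : |(u j - ui) / r j| = -((u j - ui) / r j) := by linarith
      have hb : |(usym j - ui) / ρ j| = -((usym j - ui) / ρ j) := by linarith
      have ha' : (u j - ui) / r j ≤ 0 := by
        have := abs_nonneg ((u j - ui) / r j); linarith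
      have hb' : (usym j - ui) / ρ j ≤ 0 := by
        have := abs_nonneg ((usym j - ui) / ρ j); linarith
      exact ⟨(hdivneg j hj).mp ha', (hdivneg' j hj).mp hb'⟩
    · intro ⟨ha, hb⟩
      have h3 := abs_of_nonpos ((hdivneg j hj).mpr ha)
      have h4 := abs_of_nonpos ((hdivneg' j hj).mpr hb)
      linarith
  rw [hNDiff, hNDneg]
  tauto
end

section
/- For a fixed index i, consider real numbers u_i, finite nonempty families (u_j), (u_j^sym), and positive distances r_j > 0, ρ_j > 0, with jump [[∇u]]_ij := (u_j − u_i)/r_j + (u_j^sym − u_i)/ρ_j and twice the mean 2{{|∇u|}}_ij := |u_j − u_i|/r_j + |u_j^sym − u_i|/ρ_j. Suppose u_i is NOT a local discrete extremum, i.e. there exists an index with value strictly greater than u_i and an index with value strictly less than u_i among the u_j and u_j^sym. Then D := Σ_j 2{{|∇u|}}_ij > 0, the ratio R := |Σ_j [[∇u]]_ij| / D satisfies R < 1, and consequently the detector value R^q tends to 0 as the exponent q → ∞. -/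
/-- at a point that is not a local discrete extremum the denominator is
positive, the shock-detector ratio is strictly below 1, and hence the detector value
`R ^ q` tends to 0 as the exponent `q → ∞` (mechanism of Theorem 3.3). -/
theorem shock_detector_vanishes_at_non_extrema
    {ι : Type*} (s : Finset ι) (hs : s.Nonempty)
    (ui : ℝ) (u usym : ι → ℝ) (r ρ : ι → ℝ)
    (hr : ∀ j ∈ s, 0 < r j) (hρ : ∀ j ∈ s, 0 < ρ j)
    (habove : ∃ j ∈ s, ui < u j ∨ ui < usym j)
    (hbelow : ∃ j ∈ s, u j < ui ∨ usym j < ui)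
    (D : ℝ)
    (hD : D = ∑ j ∈ s, (|u j - ui| / r j + |usym j - ui| / ρ j))
    (R : ℝ)
    (hR : R = |∑ j ∈ s, ((u j - ui) / r j + (usym j - ui) / ρ j)| / D) :
    0 < D ∧ R < 1 ∧
    Filter.Tendsto (fun q : ℕ => R ^ q) Filter.atTop (nhds 0) := by
  obtain ⟨ja, hja, hja2⟩ := habove
  obtain ⟨jb, hjb, hjb2⟩ := hbelow
  have hterm_nonneg : ∀ j ∈ s, 0 ≤ |u j - ui| / r j + |usym j - ui| / ρ j := by
    intro j hj
    have := hr j hj; have := hρ j hj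
    positivity
  have hDpos : 0 < D := by
    rw [hD]
    refine Finset.sum_pos' hterm_nonneg ⟨ja, hja, ?_⟩
    have h1 := hr ja hja; have h2 := hρ ja hja
    rcases hja2 with h | h
    · have hp : 0 < |u ja - ui| / r ja := div_pos (abs_pos.2 (by linarith)) h1
      have hq : 0 ≤ |usym ja - ui| / ρ ja := by positivity
      linarith
    · have hp : 0 < |usym ja - ui| / ρ ja := div_pos (abs_pos.2 (by linarith)) h2
      have hq : 0 ≤ |u ja - ui| / r ja := by positivity
      linarith
  set N := ∑ j ∈ s, ((u j - ui) / r j + (usym j - ui) / ρ j) with hN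
  have hND : N < D := by
    rw [hD]
    refine Finset.sum_lt_sum (fun j hj => ?_) ⟨jb, hjb, ?_⟩
    · have h1 := hr j hj; have h2 := hρ j hj
      gcongr <;> exact le_abs_self _
    · have h1 := hr jb hjb; have h2 := hρ jb hjb
      rcases hjb2 with h | h
      · have ha : (u jb - ui) / r jb < |u jb - ui| / r jb :=
          div_lt_div_of_pos_right (lt_of_lt_of_le (by linarith) (abs_nonneg _)) h1
        have hb : (usym jb - ui) / ρ jb ≤ |usym jb - ui| / ρ jb := by
          gcongr; exact le_abs_self _
        linarith
      · have ha : (usym jb - ui) / ρ jb < |usym jb - ui| / ρ jb :=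
          div_lt_div_of_pos_right (lt_of_lt_of_le (by linarith) (abs_nonneg _)) h2
        have hb : (u jb - ui) / r jb ≤ |u jb - ui| / r jb := by
          gcongr; exact le_abs_self _
        linarith
  have hDN : -D < N := by
    have : -N < D := by
      rw [hD, hN, ← Finset.sum_neg_distrib]
      refine Finset.sum_lt_sum (fun j hj => ?_) ⟨ja, hja, ?_⟩
      · have h1 := hr j hj; have h2 := hρ j hj
        have : -((u j - ui) / r j) ≤ |u j - ui| / r j := by
          rw [neg_div']; gcongr; exact neg_le_abs _
        have : -((usym j - ui) / ρ j) ≤ |usym j - ui| / ρ j := by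
          rw [neg_div']; gcongr; exact neg_le_abs _
        have hrw : -((u j - ui) / r j + (usym j - ui) / ρ j) =
            -((u j - ui) / r j) + -((usym j - ui) / ρ j) := by ring
        linarith [hrw]
      · have h1 := hr ja hja; have h2 := hρ ja hja
        have hrw : -((u ja - ui) / r ja + (usym ja - ui) / ρ ja) =
            (-(u ja - ui)) / r ja + (-(usym ja - ui)) / ρ ja := by ring
        rw [hrw]
        rcases hja2 with h | h
        · have ha : (-(u ja - ui)) / r ja < |u ja - ui| / r ja :=
            div_lt_div_of_pos_right (lt_of_lt_of_le (by linarith) (abs_nonneg _)) h1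
          have hb : (-(usym ja - ui)) / ρ ja ≤ |usym ja - ui| / ρ ja := by
            gcongr; exact neg_le_abs _
          linarith
        · have ha : (-(usym ja - ui)) / ρ ja < |usym ja - ui| / ρ ja :=
            div_lt_div_of_pos_right (lt_of_lt_of_le (by linarith) (abs_nonneg _)) h2
          have hb : (-(u ja - ui)) / r ja ≤ |u ja - ui| / r ja := by
            gcongr; exact neg_le_abs _
          linarith
    linarith
  have habsN : |N| < D := abs_lt.2 ⟨hDN, hND⟩
  have hRlt : R < 1 := by
    rw [hR]
    exact (div_lt_one hDpos).2 habsN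
  have hRnonneg : 0 ≤ R := by
    rw [hR]; positivity
  exact ⟨hDpos, hRlt, tendsto_pow_atTop_nhds_zero_of_lt_one hRnonneg hRlt⟩
end

section
/- Let E be a real normed vector space, g : E → ℝ a continuous linear map, and cst ∈ ℝ; let f : E → ℝ be the affine function f x = g x + cst. Let x_i, x_j ∈ E with x_j ≠ x_i, let τ > 0, and let x^sym := x_i − τ • (x_j − x_i) (the symmetric point lying on the opposite ray from x_i through x_j). Then the jump of the linear gradient approximation vanishes: (f x_j − f x_i)/‖x_j − x_i‖ + (f x^sym − f x_i)/‖x^sym − x_i‖ = 0. -/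
/-- for an affine function the jump of the linear gradient approximation
across `x_i` in the direction of `x_j` (with symmetric point on the opposite ray)
vanishes. -/
theorem affine_gradient_jump_vanishes
    {E : Type*} [NormedAddCommGroup E] [NormedSpace ℝ E]
    (g : E →L[ℝ] ℝ) (cst : ℝ) (f : E → ℝ) (hf : ∀ x, f x = g x + cst)
    (xi xj : E) (hne : xj ≠ xi)
    (τ : ℝ) (hτ : 0 < τ)
    (xsym : E) (hxsym : xsym = xi - τ • (xj - xi)) :
    (f xj - f xi) / ‖xj - xi‖ + (f xsym - f xi) / ‖xsym - xi‖ = 0 := by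
  have hd : xj - xi ≠ 0 := sub_ne_zero.mpr hne
  have hnorm : (0:ℝ) < ‖xj - xi‖ := norm_pos_iff.mpr hd
  have h1 : f xj - f xi = g (xj - xi) := by simp [hf, map_sub]
  have h2 : xsym - xi = -(τ • (xj - xi)) := by rw [hxsym]; abel
  have h3 : f xsym - f xi = -(τ * g (xj - xi)) := by
    have : f xsym - f xi = g (xsym - xi) := by simp [hf, map_sub]
    rw [this, h2, map_neg, map_smul]; simp
  have h4 : ‖xsym - xi‖ = τ * ‖xj - xi‖ := by
    rw [h2, norm_neg, norm_smul, Real.norm_eq_abs, abs_of_pos hτ]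
  rw [h1, h3, h4]
  field_simp
  ring
end

section
/- Let E be a real normed vector space, g : E → ℝ a continuous linear map, cst ∈ ℝ, and f x = g x + cst an affine function. Fix x_i ∈ E and a finite family of points x_j ≠ x_i with symmetric points x_j^sym := x_i − τ_j • (x_j − x_i) where τ_j > 0. Set u_i := f x_i, u_j := f x_j, u_j^sym := f x_j^sym, r_j := ‖x_j − x_i‖, ρ_j := ‖x_j^sym − x_i‖, and define the shock detector α_i := (|Σ_j ((u_j − u_i)/r_j + (u_j^sym − u_i)/ρ_j)| / Σ_j (|u_j − u_i|/r_j + |u_j^sym − u_i|/ρ_j))^q when the denominator is nonzero and α_i := 0 otherwise, for exponent q ≥ 1. Then α_i = 0. -/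
open scoped Classical in
/-- linearity preservation of the shock detector (Theorem 3.2).
If all control-point values come from an affine function, the shock detector
`α_i := (|Σ jumps| / Σ (2 means))^q` (set to 0 when the denominator vanishes)
is zero. -/
theorem shock_detector_linearity_preserving
    {E : Type*} [NormedAddCommGroup E] [NormedSpace ℝ E]
    {ι : Type*} (s : Finset ι)
    (g : E →L[ℝ] ℝ) (cst : ℝ) (f : E → ℝ) (hf : ∀ x, f x = g x + cst)
    (xi : E) (x : ι → E) (hx : ∀ j ∈ s, x j ≠ xi)
    (τ : ι → ℝ) (hτ : ∀ j ∈ s, 0 < τ j)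
    (xsym : ι → E) (hxsym : ∀ j ∈ s, xsym j = xi - τ j • (x j - xi))
    (q : ℕ) (hq : 1 ≤ q)
    (α : ℝ)
    (hα : α =
      if (∑ j ∈ s, (|f (x j) - f xi| / ‖x j - xi‖ + |f (xsym j) - f xi| / ‖xsym j - xi‖)) ≠ 0
      then (|∑ j ∈ s, ((f (x j) - f xi) / ‖x j - xi‖ + (f (xsym j) - f xi) / ‖xsym j - xi‖)| /
            (∑ j ∈ s, (|f (x j) - f xi| / ‖x j - xi‖ + |f (xsym j) - f xi| / ‖xsym j - xi‖))) ^ q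
      else 0) :
    α = 0 := by
  have hnum : ∑ j ∈ s, ((f (x j) - f xi) / ‖x j - xi‖ + (f (xsym j) - f xi) / ‖xsym j - xi‖) = 0 := by
    refine Finset.sum_eq_zero (fun j hj => ?_)
    have hr : ‖x j - xi‖ ≠ 0 := by
      simpa [sub_eq_zero] using hx j hj
    have hτj := hτ j hj
    have h1 : f (x j) - f xi = g (x j - xi) := by
      simp [hf, map_sub]
    have h2 : f (xsym j) - f xi = -(τ j * g (x j - xi)) := by
      rw [hf, hf, hxsym j hj]
      simp [map_sub, map_smul]
    have h3 : ‖xsym j - xi‖ = τ j * ‖x j - xi‖ := by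
      rw [hxsym j hj]
      simp [norm_smul, abs_of_pos hτj]
    rw [h1, h2, h3]
    field_simp
    ring
  rw [hα]
  split
  · rw [hnum, abs_zero, zero_div, zero_pow (by omega)]
  · rfl
end

section
/- Let ε > 0 and γ > 0, and let (t_k) be a finite nonempty family of real numbers that all have the same sign (t_k ≤ 0 for all k, or t_k ≥ 0 for all k). Set J := Σ_k t_k. Then the regularized detector quotient satisfies (√(J² + ε) + γ) / (Σ_k t_k²/√(t_k² + ε) + γ) ≥ 1. Consequently, with Z defined by Z x = 2x⁴ − 5x³ + 3x² + x for x < 1 and Z x = 1 for x ≥ 1, the regularized shock detector Z((√(J² + ε) + γ)/(Σ_k t_k²/√(t_k² + ε) + γ))^q equals 1 for every exponent q. -/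
/-- at a local discrete extremum all jump terms `t k` share a sign, so
the regularized detector quotient is at least 1 and the regularized shock detector
`(Z quotient)^q` equals 1 for every exponent `q`. -/
theorem regularized_detector_equals_one_at_extrema
    {ι : Type*} (s : Finset ι) (hs : s.Nonempty)
    (ε γ : ℝ) (hε : 0 < ε) (hγ : 0 < γ)
    (t : ι → ℝ)
    (hsign : (∀ k ∈ s, t k ≤ 0) ∨ (∀ k ∈ s, 0 ≤ t k))
    (J : ℝ) (hJ : J = ∑ k ∈ s, t k)
    (Z : ℝ → ℝ)
    (hZ : ∀ x : ℝ, Z x = if x < 1 then 2 * x ^ 4 - 5 * x ^ 3 + 3 * x ^ 2 + x else 1) :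
    1 ≤ (Real.sqrt (J ^ 2 + ε) + γ) /
        ((∑ k ∈ s, (t k) ^ 2 / Real.sqrt ((t k) ^ 2 + ε)) + γ) ∧
    ∀ q : ℕ,
      (Z ((Real.sqrt (J ^ 2 + ε) + γ) /
        ((∑ k ∈ s, (t k) ^ 2 / Real.sqrt ((t k) ^ 2 + ε)) + γ))) ^ q = 1 := by
  set D : ℝ := ∑ k ∈ s, (t k) ^ 2 / Real.sqrt ((t k) ^ 2 + ε) with hD
  have hterm_le : ∀ k ∈ s, (t k) ^ 2 / Real.sqrt ((t k) ^ 2 + ε) ≤ |t k| := by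
    intro k _
    have hpos : 0 < Real.sqrt ((t k) ^ 2 + ε) := Real.sqrt_pos.mpr (by positivity)
    rw [div_le_iff₀ hpos]
    calc (t k) ^ 2 = |t k| * |t k| := by rw [← sq_abs]; ring
      _ ≤ |t k| * Real.sqrt ((t k) ^ 2 + ε) := by
          apply mul_le_mul_of_nonneg_left _ (abs_nonneg _)
          calc |t k| = Real.sqrt ((t k) ^ 2) := (Real.sqrt_sq_eq_abs _).symm
            _ ≤ _ := Real.sqrt_le_sqrt (by linarith)
  have habsJ : |J| = ∑ k ∈ s, |t k| := by
    rcases hsign with h | h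
    · have : J ≤ 0 := by rw [hJ]; exact Finset.sum_nonpos h
      rw [abs_of_nonpos this, hJ, ← Finset.sum_neg_distrib]
      exact Finset.sum_congr rfl fun k hk => (abs_of_nonpos (h k hk)).symm
    · have : 0 ≤ J := by rw [hJ]; exact Finset.sum_nonneg h
      rw [abs_of_nonneg this, hJ]
      exact Finset.sum_congr rfl fun k hk => (abs_of_nonneg (h k hk)).symm
  have hD_le : D ≤ Real.sqrt (J ^ 2 + ε) := by
    calc D ≤ ∑ k ∈ s, |t k| := Finset.sum_le_sum hterm_le
      _ = |J| := habsJ.symm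
      _ = Real.sqrt (J ^ 2) := (Real.sqrt_sq_eq_abs _).symm
      _ ≤ _ := Real.sqrt_le_sqrt (by linarith)
  have hD_nonneg : 0 ≤ D :=
    Finset.sum_nonneg fun k _ => div_nonneg (by positivity) (Real.sqrt_nonneg _)
  have hden : 0 < D + γ := by linarith
  have hquot : 1 ≤ (Real.sqrt (J ^ 2 + ε) + γ) / (D + γ) := by
    rw [le_div_iff₀ hden]; linarith
  refine ⟨hquot, fun q => ?_⟩
  rw [hZ, if_neg (not_lt.mpr hquot), one_pow]
end
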